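/- Fix M > 0 and ε > 0. Let μ and ν be Borel probability measures on [0,M] with d_W(μ,ν) ≤ ε, and let x_ν ∈ [0,M] satisfy R(x_ν,ν) = opt(ν). For δ < 0 set p_δ = max(x_ν + δ, 0). Then opt(μ) − R(p_δ,μ) ≤ 2√(M·ε) + |δ| + M·ε/|δ|. In particular, taking δ = −√(M·ε), the deflated price p = max(x_ν − √(M·ε), 0) satisfies opt(μ) − R(p,μ) ≤ 4·√(M·ε). -/

import Mathlib

open MeasureTheory

noncomputable section

/-- Cumulative distribution function `F(t) = μ([0,t])`. -/
def cdf0 (μ : Measure ℝ) (t : ℝ) : ℝ := (μ (Set.Icc 0 t)).toReal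

/-- Wasserstein-1 distance between measures on `[0,M]`: `∫₀^M |F(t) - H(t)| dt`. -/
def wassDist (M : ℝ) (μ ν : Measure ℝ) : ℝ :=
  ∫ t in Set.Icc (0:ℝ) M, |cdf0 μ t - cdf0 ν t|

/-- Expected pricing revenue `R(x,μ) = x · μ{ξ : ξ ≥ x}`. -/
def rev (x : ℝ) (μ : Measure ℝ) : ℝ := x * (μ {ξ : ℝ | x ≤ ξ}).toReal

/-- Optimal revenue `opt(μ) = sup_{x ∈ [0,M]} R(x,μ)`. -/
def optRev (M : ℝ) (μ : Measure ℝ) : ℝ := ⨆ x : Set.Icc (0:ℝ) M, rev x.1 μ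

lemma prob_toReal_le_one (μ : Measure ℝ) [IsProbabilityMeasure μ] (s : Set ℝ) :
    (μ s).toReal ≤ 1 := by
  have h : μ s ≤ 1 := prob_le_one
  have := ENNReal.toReal_mono (by simp) h
  simpa using this

lemma cdf0_mono (μ : Measure ℝ) [IsProbabilityMeasure μ] : Monotone (cdf0 μ) := by
  intro s t hst
  exact ENNReal.toReal_mono (measure_ne_top μ _)
    (measure_mono (Set.Icc_subset_Icc_right hst))

lemma cdf0_nonneg (μ : Measure ℝ) (t : ℝ) : 0 ≤ cdf0 μ t := ENNReal.toReal_nonneg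

/-- Tail lower bound: `1 - F(t) ≤ μ{ξ ≥ x}` when `x ≤ t ≤ M`. -/
lemma tail_ge (M : ℝ) (μ : Measure ℝ) [IsProbabilityMeasure μ]
    (hμ : μ (Set.Icc 0 M) = 1) {x t : ℝ} (h0 : 0 ≤ t) (hxt : x ≤ t) (htM : t ≤ M) :
    1 - cdf0 μ t ≤ (μ {ξ : ℝ | x ≤ ξ}).toReal := by
  have hdisj : Disjoint (Set.Icc 0 t) (Set.Ioc t M) :=
    (Set.Iic_disjoint_Ioc le_rfl).mono_left Set.Icc_subset_Iic_self
  have hsum : μ (Set.Icc 0 t) + μ (Set.Ioc t M) = 1 := by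
    rw [← measure_union hdisj measurableSet_Ioc, Set.Icc_union_Ioc_eq_Icc h0 htM, hμ]
  have h1 : cdf0 μ t + (μ (Set.Ioc t M)).toReal = 1 := by
    rw [cdf0, ← ENNReal.toReal_add (measure_ne_top μ _) (measure_ne_top μ _), hsum]
    simp
  have hsub : Set.Ioc t M ⊆ {ξ : ℝ | x ≤ ξ} := fun ξ hξ => le_trans hxt hξ.1.le
  have h2 : (μ (Set.Ioc t M)).toReal ≤ (μ {ξ : ℝ | x ≤ ξ}).toReal :=
    ENNReal.toReal_mono (measure_ne_top μ _) (measure_mono hsub)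
  linarith

/-- Tail upper bound: `μ{ξ ≥ x} ≤ 1 - F(t)` when `t < x`. -/
lemma tail_le (μ : Measure ℝ) [IsProbabilityMeasure μ] {x t : ℝ} (htx : t < x) :
    (μ {ξ : ℝ | x ≤ ξ}).toReal ≤ 1 - cdf0 μ t := by
  have hdisj : Disjoint (Set.Icc 0 t) {ξ : ℝ | x ≤ ξ} := by
    rw [Set.disjoint_left]
    intro ξ h1 h2
    have : ξ ≤ t := h1.2
    have : x ≤ ξ := h2
    linarith
  have hsum : μ (Set.Icc 0 t) + μ {ξ : ℝ | x ≤ ξ} ≤ 1 := by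
    rw [← measure_union hdisj (show MeasurableSet {ξ : ℝ | x ≤ ξ} from measurableSet_Ici)]
    exact prob_le_one
  have h1 : cdf0 μ t + (μ {ξ : ℝ | x ≤ ξ}).toReal ≤ 1 := by
    rw [cdf0, ← ENNReal.toReal_add (measure_ne_top μ _) (measure_ne_top μ _)]
    have := ENNReal.toReal_mono ENNReal.one_ne_top hsum
    simpa using this
  linarith

/-- On any subinterval of `[0,M]` there is a point where `|F - H|` is at most its
average bound `ε / (b - a)`. -/
lemma exists_good (M ε : ℝ) (hε : 0 < ε) (μ ν : Measure ℝ)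
    [IsProbabilityMeasure μ] [IsProbabilityMeasure ν]
    (hW : ∫ t in Set.Icc (0:ℝ) M, |cdf0 μ t - cdf0 ν t| ≤ ε)
    (a b : ℝ) (ha : 0 ≤ a) (hab : a < b) (hbM : b ≤ M) :
    ∃ t, a ≤ t ∧ t < b ∧ |cdf0 μ t - cdf0 ν t| ≤ ε / (b - a) := by
  set g : ℝ → ℝ := fun t => |cdf0 μ t - cdf0 ν t| with hg
  have hmg : Measurable g :=
    (((cdf0_mono μ).measurable).sub ((cdf0_mono ν).measurable)).abs
  have hgnn : ∀ t, 0 ≤ g t := fun t => abs_nonneg _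
  have hgbd : ∀ t, ‖g t‖ ≤ 2 := by
    intro t
    rw [Real.norm_eq_abs, abs_abs]
    have h1 := prob_toReal_le_one μ (Set.Icc 0 t)
    have h2 := prob_toReal_le_one ν (Set.Icc 0 t)
    have h3 := cdf0_nonneg μ t
    have h4 := cdf0_nonneg ν t
    rw [abs_sub_le_iff]
    constructor <;> [skip; skip] <;> simp only [cdf0] at * <;> linarith
  have hgint : IntegrableOn g (Set.Icc (0:ℝ) M) := by
    apply Measure.integrableOn_of_bounded (M := 2)
    · simp [Real.volume_Icc]
    · exact hmg.aestronglyMeasurable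
    · exact ae_of_all _ hgbd
  by_contra hcon
  push_neg at hcon
  set c : ℝ := ε / (b - a) with hc
  have hba : 0 < b - a := by linarith
  have hcpos : 0 < c := div_pos hε hba
  set h' : ℝ → ℝ := (Set.Ico a b).indicator g with hh'
  have hSeq : {x : ℝ | c < h' x} = Set.Ico a b := by
    ext t
    simp only [Set.mem_setOf_eq, Set.mem_Ico]
    constructor
    · intro ht
      by_contra htn
      rw [hh', Set.indicator_of_notMem (by simpa [Set.mem_Ico] using htn)] at ht
      linarith
    · rintro ⟨ht1, ht2⟩
      rw [hh', Set.indicator_of_mem (by simp [Set.mem_Ico, ht1, ht2])]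
      exact hcon t ht1 ht2
  have hIcoSub : Set.Ico a b ⊆ Set.Icc (0:ℝ) M :=
    fun t ht => ⟨le_trans ha ht.1, le_of_lt (lt_of_lt_of_le ht.2 hbM)⟩
  have hgIco : IntegrableOn g (Set.Ico a b) := hgint.mono_set hIcoSub
  have hh'int : IntegrableOn h' (Set.Ico a b) :=
    hgIco.congr_fun (fun t ht => (Set.indicator_of_mem ht g).symm) measurableSet_Ico
  have hvol : volume (Set.Ico a b) = ENNReal.ofReal (b - a) := Real.volume_Ico
  have hvne : volume (Set.Ico a b) ≠ 0 := by
    rw [hvol]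
    simpa using hba
  have hkey := setIntegral_gt_gt hcpos.le
    (f := h') (μ := volume) (by rw [hSeq]; exact hh'int) (by rw [hSeq]; exact hvne)
  rw [hSeq] at hkey
  have hvtr : (volume (Set.Ico a b)).toReal = b - a := by
    rw [hvol, ENNReal.toReal_ofReal hba.le]
  rw [measureReal_def, hvtr] at hkey
  have heq : ∫ x in Set.Ico a b, h' x = ∫ x in Set.Ico a b, g x :=
    setIntegral_congr_fun measurableSet_Ico (fun t ht => Set.indicator_of_mem ht g)
  have hmono : ∫ x in Set.Ico a b, g x ≤ ∫ x in Set.Icc (0:ℝ) M, g x :=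
    setIntegral_mono_set hgint (ae_of_all _ hgnn)
      (HasSubset.Subset.eventuallyLE hIcoSub)
  have : (b - a) * c = ε := by
    rw [hc]
    field_simp
  linarith [hkey, heq ▸ hkey]

/-- Key transfer inequality: lowering the price by `θ` and switching measures loses at
most `θ + Mε/θ` revenue. -/
lemma transfer (M ε : ℝ) (hM : 0 < M) (hε : 0 < ε) (μ ν : Measure ℝ)
    [IsProbabilityMeasure μ] [IsProbabilityMeasure ν]
    (hν : ν (Set.Icc 0 M) = 1)
    (hW : ∫ t in Set.Icc (0:ℝ) M, |cdf0 μ t - cdf0 ν t| ≤ ε)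
    (x θ : ℝ) (hx : x ∈ Set.Icc (0:ℝ) M) (hθ : 0 < θ) :
    rev x μ ≤ rev (max (x - θ) 0) ν + θ + M * ε / θ := by
  obtain ⟨hx0, hxM⟩ := hx
  have hrevν_nn : 0 ≤ rev (max (x - θ) 0) ν :=
    mul_nonneg (le_max_right _ _) ENNReal.toReal_nonneg
  have hMεθ : 0 ≤ M * ε / θ := div_nonneg (mul_pos hM hε).le hθ.le
  rcases le_or_gt x θ with h | h
  · -- trivial case: price below θ
    have : rev x μ ≤ θ := by
      have := prob_toReal_le_one μ {ξ : ℝ | x ≤ ξ}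
      have h2 : rev x μ ≤ x * 1 :=
        mul_le_mul_of_nonneg_left this hx0
      simpa using h2.trans (by linarith)
    linarith
  · set a : ℝ := x - θ with hadef
    have ha0 : 0 < a := by simp [hadef]; linarith
    have hmax : max (x - θ) 0 = a := max_eq_left ha0.le
    obtain ⟨t, ht1, ht2, ht3⟩ := exists_good M ε hε μ ν hW a x ha0.le (by linarith) hxM
    have hxa : x - a = θ := by simp [hadef]
    rw [hxa] at ht3
    have hνt : 1 - cdf0 ν t ≤ (ν {ξ : ℝ | a ≤ ξ}).toReal :=
      tail_ge M ν hν (le_trans ha0.le ht1) ht1 (le_trans ht2.le hxM)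
    have hμt : (μ {ξ : ℝ | x ≤ ξ}).toReal ≤ 1 - cdf0 μ t := tail_le μ ht2
    have habs' : cdf0 ν t - cdf0 μ t ≤ ε / θ := by
      have := abs_sub_abs_le_abs_sub (cdf0 ν t) (cdf0 μ t)
      have h1 : cdf0 ν t - cdf0 μ t ≤ |cdf0 μ t - cdf0 ν t| := by
        rw [abs_sub_comm]
        exact le_abs_self _
      linarith
    have hchain : (μ {ξ : ℝ | x ≤ ξ}).toReal ≤ (ν {ξ : ℝ | a ≤ ξ}).toReal + ε / θ := by
      linarith
    have hνtail1 : (ν {ξ : ℝ | a ≤ ξ}).toReal ≤ 1 := prob_toReal_le_one ν _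
    have hνtail0 : 0 ≤ (ν {ξ : ℝ | a ≤ ξ}).toReal := ENNReal.toReal_nonneg
    have hεθ : 0 ≤ ε / θ := div_nonneg hε.le hθ.le
    have h1 : x * (μ {ξ : ℝ | x ≤ ξ}).toReal ≤
        x * ((ν {ξ : ℝ | a ≤ ξ}).toReal + ε / θ) :=
      mul_le_mul_of_nonneg_left hchain hx0
    have h2 : x * (ε / θ) ≤ M * (ε / θ) := mul_le_mul_of_nonneg_right hxM hεθ
    have h3 : θ * (ν {ξ : ℝ | a ≤ ξ}).toReal ≤ θ := by
      nlinarith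
    have hMεθ' : M * ε / θ = M * (ε / θ) := by ring
    rw [rev, rev, hmax, hMεθ']
    have hxeq : x = a + θ := by simp [hadef]
    nlinarith [h1, h2, h3]

/-- Regret of the deflated (`δ`-SAA) pricing policy under Wasserstein heterogeneity of
radius `ε`; with `δ = -√(Mε)` the regret is at most `4√(Mε)`. -/
theorem pricing_deflated_SAA_regret
    (M ε : ℝ) (hM : 0 < M) (hε : 0 < ε)
    (μ ν : Measure ℝ) [IsProbabilityMeasure μ] [IsProbabilityMeasure ν]
    (hμ : μ (Set.Icc 0 M) = 1) (hν : ν (Set.Icc 0 M) = 1)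
    (hW : wassDist M μ ν ≤ ε)
    (xν : ℝ) (hxν_mem : xν ∈ Set.Icc (0:ℝ) M) (hxν : rev xν ν = optRev M ν) :
    (∀ δ : ℝ, δ < 0 →
      optRev M μ - rev (max (xν + δ) 0) μ ≤
        2 * Real.sqrt (M * ε) + |δ| + M * ε / |δ|)
    ∧
    optRev M μ - rev (max (xν - Real.sqrt (M * ε)) 0) μ ≤ 4 * Real.sqrt (M * ε) := by
  have hMε : 0 < M * ε := mul_pos hM hε
  set s : ℝ := Real.sqrt (M * ε) with hsdef
  have hs : 0 < s := Real.sqrt_pos.mpr hMε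
  have hdiv : M * ε / s = s := by
    rw [hsdef]
    exact Real.div_sqrt
  have hWμν : ∫ t in Set.Icc (0:ℝ) M, |cdf0 μ t - cdf0 ν t| ≤ ε := hW
  have hWνμ : ∫ t in Set.Icc (0:ℝ) M, |cdf0 ν t - cdf0 μ t| ≤ ε := by
    simpa [abs_sub_comm] using hWμν
  haveI : Nonempty (Set.Icc (0:ℝ) M) := ⟨⟨0, Set.left_mem_Icc.mpr hM.le⟩⟩
  have hbdd : BddAbove (Set.range fun x : Set.Icc (0:ℝ) M => rev x.1 ν) := by
    refine ⟨M, ?_⟩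
    rintro r ⟨⟨y, hy0, hyM⟩, rfl⟩
    have h1 := prob_toReal_le_one ν {ξ : ℝ | y ≤ ξ}
    have : rev y ν ≤ y * 1 := mul_le_mul_of_nonneg_left h1 hy0
    simpa using this.trans (by linarith)
  have part1 : ∀ δ : ℝ, δ < 0 →
      optRev M μ - rev (max (xν + δ) 0) μ ≤
        2 * s + |δ| + M * ε / |δ| := by
    intro δ hδ
    have hδ' : 0 < -δ := by linarith
    have habsδ : |δ| = -δ := abs_of_neg hδ
    -- Step 2: rev xν ν ≤ rev p μ + |δ| + M ε / |δ|
    have step2 : rev xν ν ≤ rev (max (xν + δ) 0) μ + (-δ) + M * ε / (-δ) := by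
      have := transfer M ε hM hε ν μ hμ hWνμ xν (-δ) hxν_mem hδ'
      simpa [sub_neg_eq_add] using this
    -- Step 1: optRev μ ≤ rev xν ν + 2 s
    have step1 : optRev M μ ≤ rev xν ν + 2 * s := by
      rw [optRev]
      apply ciSup_le
      rintro ⟨y, hy⟩
      have h1 := transfer M ε hM hε μ ν hν hWμν y s hy hs
      have hmem : max (y - s) 0 ∈ Set.Icc (0:ℝ) M := by
        constructor
        · exact le_max_right _ _
        · exact max_le (by linarith [hy.2]) hM.le
      have h2 : rev (max (y - s) 0) ν ≤ optRev M ν :=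
        le_ciSup hbdd (⟨max (y - s) 0, hmem⟩ : Set.Icc (0:ℝ) M)
      rw [← hxν] at h2
      simp only
      rw [hdiv] at h1
      linarith
    rw [habsδ]
    linarith
  refine ⟨fun δ hδ => part1 δ hδ, ?_⟩
  have h := part1 (-s) (by linarith)
  have habs : |(-s)| = s := by rw [abs_neg, abs_of_pos hs]
  rw [habs, hdiv] at h
  have heq : xν + -s = xν - s := by ring
  rw [heq] at h
  linarith

end
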